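/- Let A be a matrix over a field with at least one column and let α, β, γ, δ be four distinct elements of the field. Then rank(d⁺(A)) = rank(A) + 1, where d⁺(A) is the matrix (A | A | A | A) with one additional row whose entries are α on the first block of columns, β on the second, γ on the third, and δ on the fourth. -/

import Mathlib

/-- `d⁺(A)`: four side-by-side copies of `A` with one extra row taking the values
`α`, `β`, `γ`, `δ` on the four respective blocks of columns. -/
def dPlus {m n F : Type*} (α β γ δ : F) (A : Matrix m n F) :
    Matrix (Option m) (Fin 4 × n) F :=
  fun i p => Option.elim i (![α, β, γ, δ] p.1) (fun i' => A i' p.2)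

set_option synthInstance.maxHeartbeats 1000000 in
open Matrix Module Submodule LinearMap in
theorem stmt17 {m n F : Type*} [Fintype m] [Fintype n] [Nonempty n] [Field F]
    (α β γ δ : F) (hd : [α, β, γ, δ].Pairwise (· ≠ ·)) (A : Matrix m n F) :
    (dPlus α β γ δ A).rank = A.rank + 1 := by
  classical
  have hab : α ≠ β := by
    simp [List.pairwise_cons] at hd
    exact hd.1.1
  obtain ⟨j0⟩ := ‹Nonempty n›
  set R : (Option m → F) →ₗ[F] (m → F) := LinearMap.funLeft F F some with hR
  set W : Submodule F (m → F) := LinearMap.range A.mulVecLin with hW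
  have key : LinearMap.range (dPlus α β γ δ A).mulVecLin = W.comap R := by
    ext f
    constructor
    · rintro ⟨x, rfl⟩
      refine ⟨fun j => ∑ k : Fin 4, x (k, j), ?_⟩
      funext i
      simp only [Matrix.mulVecLin_apply, Matrix.mulVec, dotProduct, dPlus,
        hR, LinearMap.funLeft_apply, Option.elim, Fintype.sum_prod_type,
        Finset.mul_sum]
      exact Finset.sum_comm
    · rintro ⟨y, hy⟩
      set s : F := (f none - α * ∑ j, y j) / (α - β) with hs
      refine ⟨fun p => (if p.1 = 0 then y p.2 else 0) +
        (if p.2 = j0 then (if p.1 = 0 then s else if p.1 = 1 then -s else 0) else 0), ?_⟩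
      funext i
      match i with
      | some i' =>
        have := congrFun hy i'
        simp only [Matrix.mulVecLin_apply, hR, LinearMap.funLeft_apply] at this
        simp only [Matrix.mulVecLin_apply, Matrix.mulVec, dotProduct, dPlus,
          Option.elim, Fintype.sum_prod_type]
        rw [← this]
        simp only [Matrix.mulVec, dotProduct]
        rw [Finset.sum_comm]
        congr 1
        funext j
        rw [← Finset.mul_sum]
        congr 1
        rw [Fin.sum_univ_four]
        by_cases hj : j = j0 <;> simp (config := { decide := true }) [hj]
      | none =>
        simp only [Matrix.mulVecLin_apply, Matrix.mulVec, dotProduct, dPlus,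
          Option.elim, Fintype.sum_prod_type, Fin.sum_univ_four]
        simp only [Matrix.cons_val_zero, Matrix.cons_val_one, Matrix.head_cons]
        simp (config := { decide := true }) [mul_add, mul_neg, Finset.sum_add_distrib, Finset.sum_ite_eq', Finset.mul_sum]
        rw [hs, ← Finset.mul_sum]
        have hab' : α - β ≠ 0 := sub_ne_zero.mpr hab
        field_simp
        ring
  have hrank : (dPlus α β γ δ A).rank = finrank F (W.comap R) := by
    rw [Matrix.rank, key]
  have hsurj : Function.Surjective R :=
    LinearMap.funLeft_surjective_of_injective F F some (Option.some_injective m)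
  set P : Submodule F (Option m → F) := W.comap R with hP
  set φ : P →ₗ[F] W := (R.domRestrict P).codRestrict W (fun x => x.2) with hφ
  have hφsurj : Function.Surjective φ := by
    rintro ⟨w, hw⟩
    obtain ⟨f, hf⟩ := hsurj w
    refine ⟨⟨f, ?_⟩, ?_⟩
    · simp only [hP, Submodule.mem_comap, hf]
      exact hw
    · ext
      subst hf
      rfl
  have hkerR_le : LinearMap.ker R ≤ P := by
    intro x hx
    rw [LinearMap.mem_ker] at hx
    simp only [hP, Submodule.mem_comap, hx]
    exact Submodule.zero_mem W
  have hker : LinearMap.ker φ = (LinearMap.ker R).comap P.subtype := by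
    ext x
    rw [LinearMap.mem_ker, Submodule.mem_comap, LinearMap.mem_ker, Subtype.ext_iff]
    rfl
  have e1 : finrank F (LinearMap.ker φ) = finrank F (LinearMap.ker R) := by
    rw [hker]
    exact (Submodule.comapSubtypeEquivOfLe hkerR_le).finrank_eq
  have e2 : finrank F (LinearMap.ker R) = 1 := by
    set e : Option m → F := fun o => o.elim 1 (fun _ => 0) with he
    have hkr : LinearMap.ker R = Submodule.span F {e} := by
      apply le_antisymm
      · intro g hg
        rw [LinearMap.mem_ker] at hg
        have hg' : ∀ i, g (some i) = 0 := fun i => congrFun hg i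
        have : g = g none • e := by
          funext o
          cases o with
          | none => simp [he]
          | some i => simp [he, hg' i]
        rw [this]
        exact Submodule.smul_mem _ _ (Submodule.mem_span_singleton_self e)
      · rw [Submodule.span_le, Set.singleton_subset_iff]
        rw [SetLike.mem_coe, LinearMap.mem_ker]
        funext i
        simp [he, hR]
    rw [hkr]
    rw [finrank_span_singleton]
    intro h
    have := congrFun h none
    simp [he] at this
  have e3 : finrank F P = finrank F W + 1 := by
    have h := LinearMap.finrank_range_add_finrank_ker φ
    rw [LinearMap.range_eq_top.mpr hφsurj, finrank_top, e1, e2] at h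
    omega
  rw [hrank, e3]
  rfl
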